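/- Let H_n ∈ ℂ^{n×n} be the Hankel matrix with entries (H_n)_{i,k} = h_{i+k} for a given sequence {h_j}_{j=0}^{2n−2} of complex numbers. Then H_n = (1/2)·[ 2·h_{n−1}·J + Σ_{j=1}^{n−1} (h_{n−1+j} + h_{j−1})·Z_1^j·J + Σ_{j=1}^{n−1} (h_{n−1+j} − h_{j−1})·Z_{−1}^j·J ]. -/
import Mathlib


open Matrix

/-- The `n × n` unit `f`-circulant matrix `Z_f`: entries `(Z_f)_{i,k} = 1` if `i = k+1`,
`(Z_f)_{0,n−1} = f`, and `0` otherwise. -/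
noncomputable def Zf (n : ℕ) (f : ℝ) : Matrix (Fin n) (Fin n) ℂ :=
  Matrix.of fun i k =>
    if (i : ℕ) = (k : ℕ) + 1 then 1
    else if (i : ℕ) = 0 ∧ (k : ℕ) = n - 1 then (f : ℂ)
    else 0

/-- The `n × n` reversal matrix `J`: entries `J_{i,k} = 1` if `i + k = n − 1`, else `0`. -/
noncomputable def Jrev (n : ℕ) : Matrix (Fin n) (Fin n) ℂ :=
  Matrix.of fun i k => if (i : ℕ) + (k : ℕ) = n - 1 then 1 else 0

/-- The `f`-circulant matrix `Z_f(v)` generated by a vector `v ∈ ℂ^n`: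
`(Z_f(v))_{i,k} = v_{i−k}` if `i ≥ k`, and `(Z_f(v))_{i,k} = f · v_{n+i−k}` if `i < k`. -/
noncomputable def ZfVec (n : ℕ) (f : ℝ) (v : Fin n → ℂ) : Matrix (Fin n) (Fin n) ℂ :=
  Matrix.of fun i k =>
    (if (k : ℕ) ≤ (i : ℕ) then 1 else (f : ℂ)) *
      v ⟨((i : ℕ) + n - (k : ℕ)) % n, Nat.mod_lt _ i.pos⟩

lemma Zf_pow_apply (n : ℕ) (f : ℝ) (j : ℕ) (hj : j ≤ n) (i k : Fin n) :
    (Zf n f ^ j) i k =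
      if (i : ℕ) = (k : ℕ) + j then 1
      else if (i : ℕ) + n = (k : ℕ) + j then (f : ℂ) else 0 := by
  induction j generalizing k with
  | zero =>
    have hk := k.isLt
    rw [pow_zero, Matrix.one_apply]
    have h0 : ¬ ((i : ℕ) + n = (k : ℕ)) := by omega
    simp [Fin.ext_iff, h0]
  | succ j ih =>
    have hj' : j ≤ n := by omega
    rw [pow_succ, Matrix.mul_apply]
    by_cases hk : (k : ℕ) + 1 < n
    · have hZ : ∀ m : Fin n, Zf n f m k = if m = (⟨(k : ℕ) + 1, hk⟩ : Fin n) then 1 else 0 := by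
        intro m
        have hkne : (k : ℕ) ≠ n - 1 := by omega
        simp [Zf, Fin.ext_iff, hkne]
      simp only [hZ, mul_ite, mul_one, mul_zero, Finset.sum_ite_eq', Finset.mem_univ, if_true]
      rw [ih hj']
      simp only [Fin.val_mk]
      split_ifs <;> first | rfl | omega
    · have hk' : (k : ℕ) = n - 1 := by have := k.isLt; omega
      have hn : 0 < n := i.pos
      have hZ : ∀ m : Fin n, Zf n f m k = if m = (⟨0, hn⟩ : Fin n) then (f : ℂ) else 0 := by
        intro m
        have h0 : ¬ ((m : ℕ) = n - 1 + 1) := by have := m.isLt; omega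
        simp [Zf, Fin.ext_iff, hk', h0]
      simp only [hZ, mul_ite, mul_zero, Finset.sum_ite_eq', Finset.mem_univ, if_true]
      rw [ih hj']
      simp only [Fin.val_mk]
      have h1 : ¬ ((i : ℕ) = (k : ℕ) + (j + 1)) := by have := i.isLt; omega
      have h2 : ((i : ℕ) + n = (k : ℕ) + (j + 1)) ↔ ((i : ℕ) = 0 + j) := by omega
      have h3 : ¬ ((i : ℕ) + n = 0 + j) := by omega
      simp only [h1, if_false, h2, h3]
      by_cases h4 : (i : ℕ) = 0 + j <;> simp [h4]

lemma ZfJ_apply (n : ℕ) (f : ℝ) (j : ℕ) (hj : j ≤ n) (i k : Fin n) :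
    (Zf n f ^ j * Jrev n) i k =
      if (i : ℕ) + (k : ℕ) = n - 1 + j then 1
      else if (i : ℕ) + (k : ℕ) + 1 = j then (f : ℂ) else 0 := by
  have hn : 0 < n := i.pos
  have hk := k.isLt
  have hm : n - 1 - (k : ℕ) < n := by omega
  have hJ : ∀ m : Fin n, Jrev n m k = if m = (⟨n - 1 - (k : ℕ), hm⟩ : Fin n) then 1 else 0 := by
    intro m
    simp only [Jrev, Matrix.of_apply, Fin.ext_iff, Fin.val_mk]
    congr 1
    simp only [eq_iff_iff]
    omega
  rw [Matrix.mul_apply]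
  simp only [hJ, mul_ite, mul_one, mul_zero, Finset.sum_ite_eq', Finset.mem_univ, if_true]
  rw [Zf_pow_apply n f j hj]
  simp only [Fin.val_mk]
  have e1 : ((i : ℕ) = n - 1 - (k : ℕ) + j) ↔ ((i : ℕ) + (k : ℕ) = n - 1 + j) := by
    have := i.isLt; omega
  have e2 : ((i : ℕ) + n = n - 1 - (k : ℕ) + j) ↔ ((i : ℕ) + (k : ℕ) + 1 = j) := by
    have := i.isLt; omega
  simp only [e1, e2]

/-- LCU decomposition of a Hankel matrix (H_n)_{i,k} = h_{i+k}:
H_n = (1/2)·[2·h_{n−1}·J + Σ_{j=1}^{n−1}(h_{n−1+j} + h_{j−1})·Z_1^j·J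
+ Σ_{j=1}^{n−1}(h_{n−1+j} − h_{j−1})·Z_{−1}^j·J]. -/
theorem hankel_LCU_decomposition (n : ℕ) (h : ℕ → ℂ)
    (H : Matrix (Fin n) (Fin n) ℂ)
    (hH : ∀ i k : Fin n, H i k = h ((i : ℕ) + (k : ℕ))) :
    H = (1 / 2 : ℂ) •
      ((2 * h (n - 1)) • Jrev n +
        ∑ j ∈ Finset.Icc 1 (n - 1), (h (n - 1 + j) + h (j - 1)) • (Zf n 1 ^ j * Jrev n) +
        ∑ j ∈ Finset.Icc 1 (n - 1), (h (n - 1 + j) - h (j - 1)) • (Zf n (-1) ^ j * Jrev n)) := by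
  ext i k
  have hn : 0 < n := i.pos
  have hik := i.isLt
  have hkk := k.isLt
  rw [hH]
  simp only [Matrix.smul_apply, Matrix.add_apply, Matrix.sum_apply, smul_eq_mul]
  have e1 : ∀ j ∈ Finset.Icc 1 (n - 1),
      (h (n - 1 + j) + h (j - 1)) * (Zf n 1 ^ j * Jrev n) i k
        = (h (n - 1 + j) + h (j - 1)) *
          (if (i : ℕ) + (k : ℕ) = n - 1 + j then 1
            else if (i : ℕ) + (k : ℕ) + 1 = j then (1 : ℂ) else 0) := by
    intro j hj
    rw [Finset.mem_Icc] at hj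
    rw [ZfJ_apply n 1 j (by omega)]
    simp only [Complex.ofReal_one]
  have e2 : ∀ j ∈ Finset.Icc 1 (n - 1),
      (h (n - 1 + j) - h (j - 1)) * (Zf n (-1) ^ j * Jrev n) i k
        = (h (n - 1 + j) - h (j - 1)) *
          (if (i : ℕ) + (k : ℕ) = n - 1 + j then 1
            else if (i : ℕ) + (k : ℕ) + 1 = j then (-1 : ℂ) else 0) := by
    intro j hj
    rw [Finset.mem_Icc] at hj
    rw [ZfJ_apply n (-1) j (by omega)]
    simp only [Complex.ofReal_neg, Complex.ofReal_one]
  rw [Finset.sum_congr rfl e1, Finset.sum_congr rfl e2]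
  have hJik : Jrev n i k = if (i : ℕ) + (k : ℕ) = n - 1 then 1 else 0 := rfl
  rcases Nat.lt_trichotomy ((i : ℕ) + (k : ℕ)) (n - 1) with hs | hs | hs
  · -- s < n - 1
    have S1 : (∑ j ∈ Finset.Icc 1 (n - 1), (h (n - 1 + j) + h (j - 1)) *
        (if (i : ℕ) + (k : ℕ) = n - 1 + j then 1
          else if (i : ℕ) + (k : ℕ) + 1 = j then (1 : ℂ) else 0))
        = h (n - 1 + ((i : ℕ) + (k : ℕ) + 1)) + h ((i : ℕ) + (k : ℕ)) := by
      rw [Finset.sum_eq_single ((i : ℕ) + (k : ℕ) + 1)]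
      · have c1 : ¬((i : ℕ) + (k : ℕ) = n - 1 + ((i : ℕ) + (k : ℕ) + 1)) := by omega
        simp [c1]
      · intro b hb hbne
        rw [Finset.mem_Icc] at hb
        have c1 : ¬((i : ℕ) + (k : ℕ) = n - 1 + b) := by omega
        have c2 : ¬((i : ℕ) + (k : ℕ) + 1 = b) := by omega
        simp [c1, c2]
      · intro hna
        exact absurd (Finset.mem_Icc.mpr ⟨by omega, by omega⟩) hna
    have S2 : (∑ j ∈ Finset.Icc 1 (n - 1), (h (n - 1 + j) - h (j - 1)) *
        (if (i : ℕ) + (k : ℕ) = n - 1 + j then 1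
          else if (i : ℕ) + (k : ℕ) + 1 = j then (-1 : ℂ) else 0))
        = -(h (n - 1 + ((i : ℕ) + (k : ℕ) + 1)) - h ((i : ℕ) + (k : ℕ))) := by
      rw [Finset.sum_eq_single ((i : ℕ) + (k : ℕ) + 1)]
      · have c1 : ¬((i : ℕ) + (k : ℕ) = n - 1 + ((i : ℕ) + (k : ℕ) + 1)) := by omega
        simp [c1]
      · intro b hb hbne
        rw [Finset.mem_Icc] at hb
        have c1 : ¬((i : ℕ) + (k : ℕ) = n - 1 + b) := by omega
        have c2 : ¬((i : ℕ) + (k : ℕ) + 1 = b) := by omega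
        simp [c1, c2]
      · intro hna
        exact absurd (Finset.mem_Icc.mpr ⟨by omega, by omega⟩) hna
    have c3 : ¬((i : ℕ) + (k : ℕ) = n - 1) := by omega
    rw [S1, S2, hJik, if_neg c3]
    ring
  · -- s = n - 1
    have S1 : (∑ j ∈ Finset.Icc 1 (n - 1), (h (n - 1 + j) + h (j - 1)) *
        (if (i : ℕ) + (k : ℕ) = n - 1 + j then 1
          else if (i : ℕ) + (k : ℕ) + 1 = j then (1 : ℂ) else 0)) = 0 := by
      refine Finset.sum_eq_zero fun b hb => ?_
      rw [Finset.mem_Icc] at hb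
      have c1 : ¬((i : ℕ) + (k : ℕ) = n - 1 + b) := by omega
      have c2 : ¬((i : ℕ) + (k : ℕ) + 1 = b) := by omega
      simp [c1, c2]
    have S2 : (∑ j ∈ Finset.Icc 1 (n - 1), (h (n - 1 + j) - h (j - 1)) *
        (if (i : ℕ) + (k : ℕ) = n - 1 + j then 1
          else if (i : ℕ) + (k : ℕ) + 1 = j then (-1 : ℂ) else 0)) = 0 := by
      refine Finset.sum_eq_zero fun b hb => ?_
      rw [Finset.mem_Icc] at hb
      have c1 : ¬((i : ℕ) + (k : ℕ) = n - 1 + b) := by omega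
      have c2 : ¬((i : ℕ) + (k : ℕ) + 1 = b) := by omega
      simp [c1, c2]
    rw [S1, S2, hJik, if_pos hs, hs]
    ring
  · -- s > n - 1
    have S1 : (∑ j ∈ Finset.Icc 1 (n - 1), (h (n - 1 + j) + h (j - 1)) *
        (if (i : ℕ) + (k : ℕ) = n - 1 + j then 1
          else if (i : ℕ) + (k : ℕ) + 1 = j then (1 : ℂ) else 0))
        = h (n - 1 + ((i : ℕ) + (k : ℕ) - (n - 1)))
            + h (((i : ℕ) + (k : ℕ) - (n - 1)) - 1) := by
      rw [Finset.sum_eq_single ((i : ℕ) + (k : ℕ) - (n - 1))]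
      · rw [if_pos (by omega : (i : ℕ) + (k : ℕ) = n - 1 + ((i : ℕ) + (k : ℕ) - (n - 1)))]
        rw [mul_one]
      · intro b hb hbne
        rw [Finset.mem_Icc] at hb
        have c1 : ¬((i : ℕ) + (k : ℕ) = n - 1 + b) := by omega
        have c2 : ¬((i : ℕ) + (k : ℕ) + 1 = b) := by omega
        simp [c1, c2]
      · intro hna
        exact absurd (Finset.mem_Icc.mpr ⟨by omega, by omega⟩) hna
    have S2 : (∑ j ∈ Finset.Icc 1 (n - 1), (h (n - 1 + j) - h (j - 1)) *
        (if (i : ℕ) + (k : ℕ) = n - 1 + j then 1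
          else if (i : ℕ) + (k : ℕ) + 1 = j then (-1 : ℂ) else 0))
        = h (n - 1 + ((i : ℕ) + (k : ℕ) - (n - 1)))
            - h (((i : ℕ) + (k : ℕ) - (n - 1)) - 1) := by
      rw [Finset.sum_eq_single ((i : ℕ) + (k : ℕ) - (n - 1))]
      · rw [if_pos (by omega : (i : ℕ) + (k : ℕ) = n - 1 + ((i : ℕ) + (k : ℕ) - (n - 1)))]
        rw [mul_one]
      · intro b hb hbne
        rw [Finset.mem_Icc] at hb
        have c1 : ¬((i : ℕ) + (k : ℕ) = n - 1 + b) := by omega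
        have c2 : ¬((i : ℕ) + (k : ℕ) + 1 = b) := by omega
        simp [c1, c2]
      · intro hna
        exact absurd (Finset.mem_Icc.mpr ⟨by omega, by omega⟩) hna
    have c3 : ¬((i : ℕ) + (k : ℕ) = n - 1) := by omega
    have harg : n - 1 + ((i : ℕ) + (k : ℕ) - (n - 1)) = (i : ℕ) + (k : ℕ) := by omega
    rw [S1, S2, hJik, if_neg c3, harg]
    ring
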